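/- Let R be a commutative Q-algebra and let (C, m) be a minimal A∞-algebra over R (m₁ = 0). Define the Kaledin class k_C ∈ coDer¹ of the bar coalgebra B(C) = (T̄(C[1]), d) by k_C = d₃ + 2d₄ + 3d₅ + ⋯ where d = d₂ + d₃ + ⋯ is the weight decomposition of the codifferential. Then [d, k_C] = 0, i.e. k_C is a Hochschild cocycle, so it defines a class in HH²(C). -/

import Mathlib

/-- the Kaledin class is a Hochschild cocycle.  For a minimal A∞-algebra
`(C, m)` over a `ℚ`-algebra, the codifferential of the bar coalgebra `B(C) = (T̄(C[1]), d)`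
decomposes by tensor weight as `d = d₂ + d₃ + ⋯`, and the Kaledin class is
`k_C = d₃ + 2 d₄ + 3 d₅ + ⋯ = Σ (n−2) dₙ`.  The claim `[d, k_C] = 0` holds weight by weight.

We formalize the weight-graded content: the coderivations `dₙ` are odd elements of the
(pre-)Lie algebra of coderivations, so the bracket `B(x, y) = [x, y]` of two odd elements is
*symmetric*; the relation `[d, d] = 0` says that for every total weight `w` the sum of
`B(dₙ, dₘ)` over `n + m = w` vanishes; and the claim `[d, k_C] = 0` says that for every `w`
the sum of `(m − 2)·B(dₙ, dₘ)` over `n + m = w` vanishes.  So: for a symmetric bilinear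
bracket `B` on a `ℚ`-module `L` and a family `d : ℕ → L` with `dₙ = 0` for `n < 2` (the
codifferential of a minimal A∞-structure starts in weight `2`), the weightwise relations
`Σ_{n+m=w} B(dₙ, dₘ) = 0` imply `Σ_{n+m=w} (m−2)·B(dₙ, dₘ) = 0`. -/
theorem stmt11 (L : Type*) [AddCommGroup L] [Module ℚ L]
    (B : L →ₗ[ℚ] L →ₗ[ℚ] L) (hsymm : ∀ x y : L, B x y = B y x)
    (d : ℕ → L) (hlow : ∀ n < 2, d n = 0)
    (hsq : ∀ w : ℕ, ∑ p ∈ Finset.HasAntidiagonal.antidiagonal w, B (d p.1) (d p.2) = 0) :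
    ∀ w : ℕ, ∑ p ∈ Finset.HasAntidiagonal.antidiagonal w, ((p.2 : ℚ) - 2) • B (d p.1) (d p.2) = 0 := by
  intro w
  set S := ∑ p ∈ Finset.HasAntidiagonal.antidiagonal w, ((p.2 : ℚ) - 2) • B (d p.1) (d p.2) with hS
  have hswap : S = ∑ p ∈ Finset.HasAntidiagonal.antidiagonal w, ((p.1 : ℚ) - 2) • B (d p.1) (d p.2) := by
    rw [hS, ← Finset.HasAntidiagonal.map_swap_antidiagonal (n := w), Finset.sum_map]
    simp [hsymm]
  have h2 : S + S = ((w : ℚ) - 4) • ∑ p ∈ Finset.HasAntidiagonal.antidiagonal w, B (d p.1) (d p.2) := by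
    calc S + S
        = ∑ p ∈ Finset.HasAntidiagonal.antidiagonal w,
            (((p.2 : ℚ) - 2) • B (d p.1) (d p.2) + ((p.1 : ℚ) - 2) • B (d p.1) (d p.2)) := by
          nth_rewrite 1 [hS]; nth_rewrite 1 [hswap]
          rw [← Finset.sum_add_distrib]
      _ = ∑ p ∈ Finset.HasAntidiagonal.antidiagonal w, ((w : ℚ) - 4) • B (d p.1) (d p.2) := by
          apply Finset.sum_congr rfl
          intro p hp
          rw [Finset.HasAntidiagonal.mem_antidiagonal] at hp
          rw [← add_smul]
          congr 1
          have : (p.1 : ℚ) + p.2 = w := by exact_mod_cast congrArg Nat.cast hp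
          linarith
      _ = ((w : ℚ) - 4) • ∑ p ∈ Finset.HasAntidiagonal.antidiagonal w, B (d p.1) (d p.2) := by
          rw [Finset.smul_sum]
  rw [hsq, smul_zero] at h2
  have h3 : (2 : ℚ) • S = 0 := by rw [two_smul]; exact h2
  have := smul_eq_zero.mp h3
  simpa using this.resolve_left (by norm_num)
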